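/- Let d ≥ 1 and let v ∈ ℝ^d with 0 < ‖v‖ ≤ 1. Then the Eddington tensor D(v) is positive semidefinite: for every w ∈ ℝ^d, ⟨w, D(v)w⟩ ≥ 0. -/

import Mathlib

/-- The Eddington factor `χ(f) = (3 + 4f²)/(5 + 2√(4 − 3f²))` of the M₁ closure. -/
noncomputable def eddingtonFactor (f : ℝ) : ℝ :=
  (3 + 4 * f ^ 2) / (5 + 2 * Real.sqrt (4 - 3 * f ^ 2))

/-- The Eddington tensor
`D(v) = ((1 − χ(‖v‖))/2) I_d + ((3χ(‖v‖) − 1)/2) (v ⊗ v)/‖v‖²`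
as a `d × d` real matrix, for `v ∈ ℝ^d = EuclideanSpace ℝ (Fin d)`. -/
noncomputable def eddingtonTensor (d : ℕ) (v : EuclideanSpace ℝ (Fin d)) :
    Matrix (Fin d) (Fin d) ℝ :=
  ((1 - eddingtonFactor ‖v‖) / 2) • (1 : Matrix (Fin d) (Fin d) ℝ) +
    ((3 * eddingtonFactor ‖v‖ - 1) / 2 / ‖v‖ ^ 2) • Matrix.of (fun i j => v i * v j)

lemma eddingtonFactor_bounds {f : ℝ} (hf0 : 0 < f) (hf1 : f ≤ 1) :
    1/3 ≤ eddingtonFactor f ∧ eddingtonFactor f ≤ 1 := by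
  set s := Real.sqrt (4 - 3 * f ^ 2) with hs
  have hf2 : f ^ 2 ≤ 1 := by nlinarith
  have hnn : (0:ℝ) ≤ 4 - 3 * f ^ 2 := by nlinarith
  have hs0 : 0 ≤ s := Real.sqrt_nonneg _
  have hs1 : 1 ≤ s := by
    rw [hs, show (1:ℝ) = Real.sqrt 1 by simp]
    exact Real.sqrt_le_sqrt (by nlinarith)
  have hs4 : s ≤ 2 := by
    rw [hs, show (2:ℝ) = Real.sqrt 4 by
      rw [show (4:ℝ) = 2^2 by norm_num, Real.sqrt_sq (by norm_num : (0:ℝ) ≤ 2)]]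
    exact Real.sqrt_le_sqrt (by nlinarith)
  have hden : (0:ℝ) < 5 + 2 * s := by linarith
  have hf2' : 0 ≤ f ^ 2 := sq_nonneg f
  unfold eddingtonFactor
  rw [← hs]
  constructor
  · rw [div_le_div_iff₀ (by norm_num) hden]; nlinarith
  · rw [div_le_one hden]; nlinarith

/-- For `0 < ‖v‖ ≤ 1`, the Eddington tensor `D(v)` is positive semidefinite:
`⟨w, D(v)w⟩ ≥ 0` for every `w ∈ ℝ^d`. -/
theorem eddingtonTensor_posSemidef (d : ℕ) (hd : 1 ≤ d)
    (v : EuclideanSpace ℝ (Fin d)) (hv0 : 0 < ‖v‖) (hv1 : ‖v‖ ≤ 1) :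
    ∀ w : EuclideanSpace ℝ (Fin d),
      0 ≤ inner (𝕜 := ℝ) w (WithLp.toLp 2 ((eddingtonTensor d v).mulVec w) : EuclideanSpace ℝ (Fin d)) := by
  intro w
  obtain ⟨h13, h1⟩ := eddingtonFactor_bounds hv0 hv1
  set χ := eddingtonFactor ‖v‖ with hχ
  set a := (1 - χ) / 2 with ha
  set b := (3 * χ - 1) / 2 / ‖v‖ ^ 2 with hb
  have ha0 : 0 ≤ a := by rw [ha]; linarith
  have hb0 : 0 ≤ b := by
    rw [hb]
    apply div_nonneg (by linarith) (by positivity)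
  have key : inner (𝕜 := ℝ) w (WithLp.toLp 2 ((eddingtonTensor d v).mulVec w) : EuclideanSpace ℝ (Fin d)) =
      a * ∑ i, w i ^ 2 + b * (∑ i, v i * w i) ^ 2 := by
    simp only [PiLp.inner_apply, RCLike.inner_apply, conj_trivial, eddingtonTensor,
      Matrix.add_mulVec, Matrix.smul_mulVec, Matrix.one_mulVec,
      Matrix.mulVec, dotProduct, Matrix.of_apply, Pi.add_apply, Pi.smul_apply,
      smul_eq_mul, ← hχ, ← ha, ← hb]
    simp only [add_mul, Finset.sum_add_distrib]
    congr 1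
    · rw [Finset.mul_sum]
      exact Finset.sum_congr rfl fun x _ => by ring
    · rw [sq, Finset.sum_mul_sum, Finset.mul_sum]
      refine Finset.sum_congr rfl fun x _ => ?_
      rw [Finset.mul_sum, Finset.sum_mul, Finset.mul_sum]
      exact Finset.sum_congr rfl fun j _ => by ring
  rw [key]
  have h2 : 0 ≤ ∑ i, w i ^ 2 := Finset.sum_nonneg fun i _ => sq_nonneg _
  positivity
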